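/- Over C, the group of matrices of the form (a_{ij})_{0≤i,j≤4} with a_{i0}=0 for i≥1, a_{1j}=0 for j≠1, a_{2j}=0 for j≠2, a_{3j}=0 for j∉{1,3}, a_{4j}=0 for j∉{1,4}, a_{00}a_{11}a_{22}=1, a_{33}^2 a_{44}=1, has dimension 9 as an algebraic variety: it is parametrized bijectively by (a_{01},a_{02},a_{03},a_{04},a_{11},a_{22},a_{31},a_{33},a_{41}) ∈ C^4 × (C^*)^2 × C × C^* × C. -/

import Mathlib

open Matrix

def GD5A1 : Set (Matrix (Fin 5) (Fin 5) ℂ) :=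
  {A | A.det ≠ 0 ∧
    (∀ i : Fin 5, i ≠ 0 → A i 0 = 0) ∧
    (∀ j : Fin 5, j ≠ 1 → A 1 j = 0) ∧
    (∀ j : Fin 5, j ≠ 2 → A 2 j = 0) ∧
    (∀ j : Fin 5, j ≠ 1 → j ≠ 3 → A 3 j = 0) ∧
    (∀ j : Fin 5, j ≠ 1 → j ≠ 4 → A 4 j = 0) ∧
    A 0 0 * A 1 1 * A 2 2 = 1 ∧ A 3 3 ^ 2 * A 4 4 = 1}

noncomputable def paramD5A1 (v : Fin 9 → ℂ) : Matrix (Fin 5) (Fin 5) ℂ :=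
  !![(v 4 * v 5)⁻¹, v 0, v 1, v 2, v 3;
     0, v 4, 0, 0, 0;
     0, 0, v 5, 0, 0;
     0, v 6, 0, v 7, 0;
     0, v 8, 0, 0, (v 7 ^ 2)⁻¹]

/-- The group `GD5A1` is a 9-dimensional variety: it is parametrized bijectively by
`(a₀₁,a₀₂,a₀₃,a₀₄,a₁₁,a₂₂,a₃₁,a₃₃,a₄₁) ∈ ℂ⁴ × (ℂ*)² × ℂ × ℂ* × ℂ`. -/
theorem GD5A1_dimension :
    Set.InjOn paramD5A1 {v | v 4 ≠ 0 ∧ v 5 ≠ 0 ∧ v 7 ≠ 0} ∧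
    paramD5A1 '' {v | v 4 ≠ 0 ∧ v 5 ≠ 0 ∧ v 7 ≠ 0} = GD5A1 := by
  constructor
  · intro v hv w hw h
    have e : ∀ i j, paramD5A1 v i j = paramD5A1 w i j := fun i j => by rw [h]
    funext k
    fin_cases k
    · exact e 0 1
    · exact e 0 2
    · exact e 0 3
    · exact e 0 4
    · exact e 1 1
    · exact e 2 2
    · exact e 3 1
    · exact e 3 3
    · exact e 4 1
  · ext A
    constructor
    · rintro ⟨v, ⟨h4, h5, h7⟩, rfl⟩
      refine ⟨?_, ?_, ?_, ?_, ?_, ?_, ?_, ?_⟩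
      · have : (paramD5A1 v).det = (v 7)⁻¹ := by
          simp [paramD5A1, Matrix.det_succ_row_zero, Fin.sum_univ_succ]
          field_simp
        rw [this]
        exact inv_ne_zero h7
      · intro i hi; fin_cases i <;> simp_all [paramD5A1, Matrix.vecHead, Matrix.vecTail]
      · intro j hj; fin_cases j <;> simp_all [paramD5A1, Matrix.vecHead, Matrix.vecTail]
      · intro j hj; fin_cases j <;> simp_all [paramD5A1, Matrix.vecHead, Matrix.vecTail]
      · intro j h1 h3; fin_cases j <;> simp_all [paramD5A1, Matrix.vecHead, Matrix.vecTail]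
      · intro j h1 h4'; fin_cases j <;> simp_all [paramD5A1, Matrix.vecHead, Matrix.vecTail]
      · simp [paramD5A1]; field_simp; try ring
      · simp [paramD5A1]; field_simp; try ring
    · rintro ⟨hdet, hc0, hr1, hr2, hr3, hr4, he1, he2⟩
      have h4 : A 1 1 ≠ 0 := fun h => by simp [h] at he1
      have h5 : A 2 2 ≠ 0 := fun h => by simp [h] at he1
      have h7 : A 3 3 ≠ 0 := fun h => by simp [h] at he2
      refine ⟨![A 0 1, A 0 2, A 0 3, A 0 4, A 1 1, A 2 2, A 3 1, A 3 3, A 4 1],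
        ⟨h4, h5, h7⟩, ?_⟩
      have h00 : A 0 0 = (A 1 1 * A 2 2)⁻¹ := by
        field_simp
        linear_combination he1
      have h44 : A 4 4 = (A 3 3 ^ 2)⁻¹ := by
        field_simp
        linear_combination he2
      ext i j
      fin_cases i <;> fin_cases j
      · exact h00.symm
      · rfl
      · rfl
      · rfl
      · rfl
      · exact (hc0 1 (by decide)).symm
      · rfl
      · exact (hr1 2 (by decide)).symm
      · exact (hr1 3 (by decide)).symm
      · exact (hr1 4 (by decide)).symm
      · exact (hc0 2 (by decide)).symm
      · exact (hr2 1 (by decide)).symm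
      · rfl
      · exact (hr2 3 (by decide)).symm
      · exact (hr2 4 (by decide)).symm
      · exact (hc0 3 (by decide)).symm
      · rfl
      · exact (hr3 2 (by decide) (by decide)).symm
      · rfl
      · exact (hr3 4 (by decide) (by decide)).symm
      · exact (hc0 4 (by decide)).symm
      · rfl
      · exact (hr4 2 (by decide) (by decide)).symm
      · exact (hr4 3 (by decide) (by decide)).symm
      · exact h44.symm
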